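/- For every real p ≥ 2 and all real numbers a, b, the inequality |a−b|^p ≥ |a|^p − p|a|^{p−2}ab + c_p|b|^p holds, where c_p = min_{0<t≤1/2} ((1−t)^p − t^p + p t^{p−1}) > 0. -/
import Mathlib

open Real Set MeasureTheory intervalIntegral

lemma add_rpow_le' {x y q : ℝ} (hx : 0 ≤ x) (hy : 0 ≤ y) (hq : 1 ≤ q) :
    x^q + y^q ≤ (x+y)^q := by
  have h := NNReal.add_rpow_le_rpow_add x.toNNReal y.toNNReal hq
  have := NNReal.coe_le_coe.2 h
  push_cast [NNReal.coe_rpow, Real.coe_toNNReal x hx, Real.coe_toNNReal y hy] at this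
  convert this using 2

lemma L1 {p w : ℝ} (hp : 2 ≤ p) (hw : 0 ≤ w) : w^p + p * w^(p-1) + 1 ≤ (w+1)^p := by
  have hp0 : (0:ℝ) < p := by linarith
  have hp1 : (1:ℝ) ≤ p - 1 := by linarith
  have hcont : Continuous fun u : ℝ => u ^ (p-1) := continuous_rpow_const (by linarith)
  have hcont2 : Continuous fun u : ℝ => w ^ (p-1) + (u - w) ^ (p-1) :=
    continuous_const.add (hcont.comp (continuous_id.sub continuous_const))
  have hRHS : ∫ u in w..(w+1), u^(p-1) = ((w+1)^p - w^p) / p := by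
    rw [integral_rpow (Or.inl (by linarith : (-1:ℝ) < p - 1))]
    norm_num
  have hsub : ∫ u in w..(w+1), (u - w)^(p-1) = 1 / p := by
    rw [intervalIntegral.integral_comp_sub_right (fun x => x ^ (p-1)) w]
    simp only [sub_self, add_sub_cancel_left]
    rw [integral_rpow (Or.inl (by linarith : (-1:ℝ) < p - 1))]
    rw [sub_add_cancel, Real.one_rpow, Real.zero_rpow hp0.ne']
    ring
  have hLHS : ∫ u in w..(w+1), (w ^ (p-1) + (u - w) ^ (p-1)) = w^(p-1) + 1/p := by
    have hi2 : IntervalIntegrable (fun u : ℝ => (u - w)^(p-1)) volume w (w+1) :=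
      (hcont.comp (continuous_id.sub continuous_const)).intervalIntegrable _ _
    rw [intervalIntegral.integral_add intervalIntegrable_const hi2,
      intervalIntegral.integral_const, hsub]
    simp
  have hmono : ∫ u in w..(w+1), (w ^ (p-1) + (u - w) ^ (p-1)) ≤ ∫ u in w..(w+1), u^(p-1) := by
    apply intervalIntegral.integral_mono_on (by linarith)
      (hcont2.intervalIntegrable _ _) (hcont.intervalIntegrable _ _)
    intro u hu
    have hu1 : w ≤ u := hu.1
    have := add_rpow_le' hw (by linarith : (0:ℝ) ≤ u - w) hp1
    rwa [add_sub_cancel] at this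
  rw [hLHS, hRHS] at hmono
  have h2 : p * (w ^ (p-1) + 1/p) ≤ p * (((w + 1) ^ p - w ^ p) / p) :=
    mul_le_mul_of_nonneg_left hmono hp0.le
  rw [mul_div_cancel₀ _ hp0.ne'] at h2
  have : p * (1/p) = 1 := by field_simp
  nlinarith [h2]
lemma L2 {p w : ℝ} (hp : 2 ≤ p) (hw : 0 ≤ w) : (w+1)^p - w^p + 1 ≤ p * (w+1)^(p-1) := by
  have hp0 : (0:ℝ) < p := by linarith
  have hp1 : (1:ℝ) ≤ p - 1 := by linarith
  have hcont : Continuous fun u : ℝ => u ^ (p-1) := continuous_rpow_const (by linarith)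
  have hcont2 : Continuous fun u : ℝ => u ^ (p-1) + (w + 1 - u) ^ (p-1) :=
    (hcont).add (hcont.comp (continuous_const.sub continuous_id))
  have hRHS : ∫ u in w..(w+1), u^(p-1) = ((w+1)^p - w^p) / p := by
    rw [integral_rpow (Or.inl (by linarith : (-1:ℝ) < p - 1))]
    norm_num
  have hsub : ∫ u in w..(w+1), (w + 1 - u)^(p-1) = 1 / p := by
    rw [intervalIntegral.integral_comp_sub_left (fun x => x ^ (p-1)) (w+1)]
    simp only [sub_self, add_sub_cancel_left]
    rw [integral_rpow (Or.inl (by linarith : (-1:ℝ) < p - 1))]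
    rw [sub_add_cancel, Real.one_rpow, Real.zero_rpow hp0.ne']
    ring
  have hLHS : ∫ u in w..(w+1), (u ^ (p-1) + (w + 1 - u) ^ (p-1))
      = ((w+1)^p - w^p) / p + 1/p := by
    have hi2 : IntervalIntegrable (fun u : ℝ => (w + 1 - u)^(p-1)) volume w (w+1) :=
      (hcont.comp (continuous_const.sub continuous_id)).intervalIntegrable _ _
    rw [intervalIntegral.integral_add (hcont.intervalIntegrable _ _) hi2, hRHS, hsub]
  have hmono : ∫ u in w..(w+1), (u ^ (p-1) + (w + 1 - u) ^ (p-1))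
      ≤ ∫ u in w..(w+1), (w+1)^(p-1) := by
    apply intervalIntegral.integral_mono_on (by linarith)
      (hcont2.intervalIntegrable _ _) intervalIntegrable_const
    intro u hu
    have := add_rpow_le' (le_trans hw hu.1) (by linarith [hu.2] : (0:ℝ) ≤ w + 1 - u) hp1
    rwa [add_sub_cancel] at this
  rw [hLHS, intervalIntegral.integral_const] at hmono
  simp only [add_sub_cancel_left, one_smul] at hmono
  have h2 : p * (((w+1)^p - w^p)/p + 1/p) ≤ p * (w+1)^(p-1) :=
    mul_le_mul_of_nonneg_left hmono hp0.le
  have e1 : p * (((w+1)^p - w^p)/p + 1/p) = (w+1)^p - w^p + 1 := by field_simp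
  linarith [h2, e1.symm.le]
lemma claimA {p t a : ℝ} (hp : 2 ≤ p) (ht : 0 < t) (hta : t ≤ a) (hsum : t + a = 1) :
    t^(p-1) * (p - 2*t) ≤ a^(p-1) * (p - 2*a) := by
  have ha : 0 < a := lt_of_lt_of_le ht hta
  have h1 : t^(p-1) = a^(p-1) * (t/a)^(p-1) := by
    rw [← Real.mul_rpow ha.le (div_nonneg ht.le ha.le), mul_div_cancel₀ _ ha.ne']
  have h2 : (t/a)^(p-1) ≤ t/a := by
    have := Real.rpow_le_rpow_of_exponent_ge (div_pos ht ha) (div_le_one_of_le₀ hta ha.le)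
      (by linarith : (1:ℝ) ≤ p - 1)
    rwa [Real.rpow_one] at this
  have hpt : 0 ≤ p - 2*t := by nlinarith
  have hap : (0:ℝ) ≤ a^(p-1) := Real.rpow_nonneg ha.le _
  calc t^(p-1) * (p - 2*t) = a^(p-1) * ((t/a)^(p-1) * (p - 2*t)) := by rw [h1]; ring
    _ ≤ a^(p-1) * ((t/a) * (p - 2*t)) := by
        apply mul_le_mul_of_nonneg_left (mul_le_mul_of_nonneg_right h2 hpt) hap
    _ ≤ a^(p-1) * (p - 2*a) := by
        apply mul_le_mul_of_nonneg_left _ hap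
        rw [div_mul_eq_mul_div, div_le_iff₀ ha]
        nlinarith
  
lemma key {p : ℝ} (hp : 2 ≤ p) {c : ℝ}
    (hub : ∀ t ∈ Ioc (0:ℝ) (1/2), c ≤ (1-t)^p - t^p + p*t^(p-1)) (hc1 : c ≤ 1) (a : ℝ) :
    |a|^p - p * (Real.sign a * |a|^(p-1)) + c ≤ |a - 1|^p := by
  have hp0 : (0:ℝ) < p := by linarith
  have hrpow_succ : ∀ x : ℝ, 0 < x → x^p = x^(p-1) * x := by
    intro x hx
    have h1 : x^(p-1) * x = x^(p-1) * x^(1:ℝ) := by rw [Real.rpow_one]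
    rw [h1, ← Real.rpow_add hx]
    norm_num
  rcases le_or_gt a 0 with h0 | h0
  · -- a ≤ 0
    rcases eq_or_lt_of_le h0 with rfl | hneg
    · simp only [Real.sign_zero, abs_zero, zero_mul, mul_zero, sub_zero, zero_sub, abs_neg,
        abs_one, Real.one_rpow, Real.zero_rpow hp0.ne']
      linarith
    · set s := -a with hs
      have hs0 : 0 < s := by simp [hs]; linarith
      have e1 : |a| = s := by rw [abs_of_neg hneg]
      have e2 : |a - 1| = s + 1 := by rw [abs_of_neg (by linarith : a - 1 < 0)]; ring
      rw [e1, e2, Real.sign_of_neg hneg]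
      have := L1 hp hs0.le (p := p)
      linarith
  rcases le_or_gt a (1/2) with h12 | h12
  · -- 0 < a ≤ 1/2
    have e1 : |a| = a := abs_of_pos h0
    have e2 : |a - 1| = 1 - a := by rw [abs_of_neg (by linarith : a - 1 < 0)]; ring
    rw [e1, e2, Real.sign_of_pos h0]
    have := hub a ⟨h0, h12⟩
    linarith
  rcases lt_or_ge a 1 with h1 | h1
  · -- 1/2 < a < 1
    set t := 1 - a with htdef
    have ht : 0 < t := by simp [htdef]; linarith
    have ht2 : t ≤ 1/2 := by simp [htdef]; linarith
    have e1 : |a| = a := abs_of_pos h0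
    have e2 : |a - 1| = t := by rw [abs_of_neg (by linarith : a - 1 < 0)]; simp [htdef]
    rw [e1, e2, Real.sign_of_pos h0]
    have hub' := hub t ⟨ht, ht2⟩
    have e3 : (1:ℝ) - t = a := by simp [htdef]
    rw [e3] at hub'
    have hA := claimA hp ht (by linarith : t ≤ a) (by linarith : t + a = 1)
    have hap := hrpow_succ a h0
    have htp := hrpow_succ t ht
    nlinarith [hA, hap, htp]
  · -- a ≥ 1
    have e1 : |a| = a := abs_of_pos h0
    have e2 : |a - 1| = a - 1 := abs_of_nonneg (by linarith)
    rw [e1, e2, Real.sign_of_pos h0]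
    have := L2 hp (by linarith : (0:ℝ) ≤ a - 1) (p := p)
    rw [sub_add_cancel] at this
    linarith
lemma hrpow_succ' {p : ℝ} (hp : 0 < p) {x : ℝ} (hx : 0 < x) : x^p = x^(p-1) * x := by
  have h1 : x^(p-1) * x = x^(p-1) * x^(1:ℝ) := by rw [Real.rpow_one]
  rw [h1, ← Real.rpow_add hx]
  norm_num

lemma sign_div_abs {a b : ℝ} (hb : b ≠ 0) : Real.sign (a/b) * |b| = Real.sign a * b := by
  rcases lt_trichotomy a 0 with ha|rfl|ha
  · rcases lt_or_gt_of_ne hb with h|h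
    · rw [Real.sign_of_pos (div_pos_of_neg_of_neg ha h), Real.sign_of_neg ha, abs_of_neg h]; ring
    · rw [Real.sign_of_neg (div_neg_of_neg_of_pos ha h), Real.sign_of_neg ha, abs_of_pos h]
  · simp [Real.sign_zero]
  · rcases lt_or_gt_of_ne hb with h|h
    · rw [Real.sign_of_neg (div_neg_of_pos_of_neg ha h), Real.sign_of_pos ha, abs_of_neg h]; ring
    · rw [Real.sign_of_pos (div_pos ha h), Real.sign_of_pos ha, abs_of_pos h]


theorem stmt_0 (p a b : ℝ) (hp : 2 ≤ p) :
    0 < sInf ((fun t : ℝ => (1 - t) ^ p - t ^ p + p * t ^ (p - 1)) '' Ioc (0 : ℝ) (1 / 2)) ∧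
    |a - b| ^ p ≥ |a| ^ p - p * (Real.sign a * |a| ^ (p - 1)) * b +
      sInf ((fun t : ℝ => (1 - t) ^ p - t ^ p + p * t ^ (p - 1)) '' Ioc (0 : ℝ) (1 / 2)) *
        |b| ^ p := by
  have hp0 : (0:ℝ) < p := by linarith
  set f : ℝ → ℝ := fun t => (1 - t) ^ p - t ^ p + p * t ^ (p - 1) with hf
  set S := f '' Ioc (0:ℝ) (1/2) with hS
  have hlbS : ∀ y ∈ S, (1/2:ℝ)^p ≤ y := by
    rintro y ⟨t, ⟨ht0, ht2⟩, rfl⟩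
    have h1 : ((1:ℝ)/2)^p ≤ (1-t)^p :=
      Real.rpow_le_rpow (by norm_num) (by linarith) (by linarith)
    have h2 : t^p ≤ p * t^(p-1) := by
      have he : t^p = t^(p-1) * t := hrpow_succ' hp0 ht0
      have hnn : (0:ℝ) ≤ t^(p-1) := Real.rpow_nonneg ht0.le _
      nlinarith
    simp only [hf]
    linarith
  have hbdd : BddBelow S := ⟨(1/2)^p, hlbS⟩
  have hne : S.Nonempty := ⟨f (1/2), ⟨1/2, ⟨by norm_num, le_refl _⟩, rfl⟩⟩
  have hpos : 0 < sInf S :=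
    lt_of_lt_of_le (Real.rpow_pos_of_pos (by norm_num) p) (le_csInf hne hlbS)
  have hub : ∀ t ∈ Ioc (0:ℝ) (1/2), sInf S ≤ f t := fun t ht => csInf_le hbdd ⟨t, ht, rfl⟩
  have hc1 : sInf S ≤ 1 := by
    have h := hub (1/2) ⟨by norm_num, le_refl _⟩
    have hb2 : p ≤ 2^(p-1) := by
      have := one_add_mul_self_le_rpow_one_add (by norm_num : (-1:ℝ) ≤ 1)
        (by linarith : (1:ℝ) ≤ p-1)
      norm_num at this
      linarith
    have hinv : ((1:ℝ)/2)^(p-1) = (2^(p-1))⁻¹ := by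
      rw [one_div, Real.inv_rpow (by norm_num)]
    have h2pos : (0:ℝ) < 2^(p-1) := Real.rpow_pos_of_pos (by norm_num) _
    have hfe : f (1/2) = p * ((1:ℝ)/2)^(p-1) := by simp only [hf]; norm_num
    rw [hfe, hinv] at h
    have : p * (2^(p-1):ℝ)⁻¹ ≤ 1 := by
      rw [← div_eq_mul_inv, div_le_one h2pos]; exact hb2
    linarith
  refine ⟨hpos, ?_⟩
  rcases eq_or_ne b 0 with rfl|hb
  · simp [Real.zero_rpow hp0.ne']
  · have hl0 : 0 < |b| := abs_pos.2 hb
    have hkey := key hp hub hc1 (a/b)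
    have hmul := mul_le_mul_of_nonneg_right hkey (Real.rpow_nonneg (abs_nonneg b) p)
    have E1 : |a/b - 1|^p * |b|^p = |a - b|^p := by
      rw [← Real.mul_rpow (abs_nonneg _) (abs_nonneg _), ← abs_mul]
      congr 1
      congr 1
      field_simp
    have E2 : |a/b|^p * |b|^p = |a|^p := by
      rw [← Real.mul_rpow (abs_nonneg _) (abs_nonneg _), ← abs_mul]
      congr 2
      field_simp
    have E3 : Real.sign (a/b) * |a/b|^(p-1) * |b|^p = Real.sign a * |a|^(p-1) * b := by
      rw [hrpow_succ' hp0 hl0]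
      have e4 : |a/b|^(p-1) * |b|^(p-1) = |a|^(p-1) := by
        rw [← Real.mul_rpow (abs_nonneg _) (abs_nonneg _), ← abs_mul]
        congr 2
        field_simp
      calc Real.sign (a/b) * |a/b|^(p-1) * (|b|^(p-1) * |b|)
          = (|a/b|^(p-1) * |b|^(p-1)) * (Real.sign (a/b) * |b|) := by ring
        _ = |a|^(p-1) * (Real.sign a * b) := by rw [e4, sign_div_abs hb]
        _ = Real.sign a * |a|^(p-1) * b := by ring
    have expand : (|a/b|^p - p*(Real.sign (a/b) * |a/b|^(p-1)) + sInf S) * |b|^p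
        = |a/b|^p * |b|^p - p * (Real.sign (a/b) * |a/b|^(p-1) * |b|^p) + sInf S * |b|^p := by
      ring
    rw [expand, E1, E2, E3] at hmul
    rw [ge_iff_le]
    linarith [hmul]
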